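/- arXiv:1312.5598 — 2 statements merged into one kernel-verified Lean document; each statement's English description precedes it below -/
import Mathlib

section
/- Let G = (V,E) be a finite simple undirected connected graph. Then |S| ≤ |N(S)| holds for every independent set S ⊆ V (equivalently ν̄_G ≤ 0) if and only if G is quasi-regularizable, i.e., there exists an assignment of non-negative integer weights to the edges of G such that the sum of the weights of the edges incident to each vertex equals the same strictly positive value for all vertices. -/
open Finset

variable {V : Type*}

/-- `N(T)`: the set of vertices adjacent to at least one vertex of `T`. -/
def nbhd [Fintype V] [DecidableEq V] (G : SimpleGraph V) [DecidableRel G.Adj]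
    (T : Finset V) : Finset V :=
  Finset.univ.filter fun j => ∃ i ∈ T, G.Adj i j

/-- `S` is an independent set of `G`. -/
def IsIndepF (G : SimpleGraph V) (S : Finset V) : Prop :=
  ∀ i ∈ S, ∀ j ∈ S, ¬ G.Adj i j

/-- `G` is quasi-regularizable: there is an assignment of non-negative integer weights to the
edges of `G` such that the sum of the weights of the edges incident to each vertex equals the
same strictly positive value for all vertices. -/
def QuasiRegularizable {W : Type*} (H : SimpleGraph W) : Prop :=
  ∃ (w : Sym2 W → ℕ) (c : ℕ), 0 < c ∧ ∀ i : W, ∑ᶠ e ∈ H.incidenceSet i, w e = c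

lemma finsum_inc [Fintype V] [DecidableEq V] (G : SimpleGraph V) [DecidableRel G.Adj]
    (w : Sym2 V → ℕ) (i : V) :
    ∑ᶠ e ∈ G.incidenceSet i, w e = ∑ e ∈ G.incidenceFinset i, w e := by
  rw [← finsum_mem_coe_finset]
  congr 1
  simp [SimpleGraph.incidenceFinset]

lemma sum_biUnion_le' {α β : Type*} [DecidableEq β] (f : β → ℕ) (t : α → Finset β)
    (s : Finset α) : ∑ e ∈ s.biUnion t, f e ≤ ∑ a ∈ s, ∑ e ∈ t a, f e := by
  classical
  induction s using Finset.induction with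
  | empty => simp
  | insert _ _ h ih =>
    rw [Finset.biUnion_insert, Finset.sum_insert h]
    exact le_trans (Nat.le.intro (Finset.sum_union_inter)) (Nat.add_le_add_left ih _)

lemma mem_nbhd [Fintype V] [DecidableEq V] (G : SimpleGraph V) [DecidableRel G.Adj]
    (T : Finset V) (j : V) : j ∈ nbhd G T ↔ ∃ i ∈ T, G.Adj i j := by
  simp [nbhd]

/-- The neighborhood condition extends from independent sets to all sets. -/
lemma nbhd_card_all [Fintype V] [DecidableEq V] (G : SimpleGraph V) [DecidableRel G.Adj]
    (h : ∀ S : Finset V, IsIndepF G S → S.card ≤ (nbhd G S).card) (T : Finset V) :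
    T.card ≤ (nbhd G T).card := by
  set S : Finset V := T \ nbhd G T with hSdef
  have hST : S ⊆ T := Finset.sdiff_subset
  have hS : IsIndepF G S := by
    intro i hi j hj hadj
    have hiT : i ∈ T := hST hi
    have : j ∈ nbhd G T := (mem_nbhd G T j).mpr ⟨i, hiT, hadj⟩
    exact (Finset.mem_sdiff.mp hj).2 this
  have hNS_T : ∀ x ∈ nbhd G S, x ∉ T := by
    intro x hx hxT
    obtain ⟨s, hs, hadj⟩ := (mem_nbhd G S x).mp hx
    exact (Finset.mem_sdiff.mp hs).2 ((mem_nbhd G T s).mpr ⟨x, hxT, hadj.symm⟩)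
  have hdisj : Disjoint (nbhd G S) (T ∩ nbhd G T) := by
    rw [Finset.disjoint_left]
    intro x hx hx2
    exact hNS_T x hx (Finset.mem_inter.mp hx2).1
  have hsub : nbhd G S ∪ (T ∩ nbhd G T) ⊆ nbhd G T := by
    intro x hx
    rcases Finset.mem_union.mp hx with hx | hx
    · obtain ⟨s, hs, hadj⟩ := (mem_nbhd G S x).mp hx
      exact (mem_nbhd G T x).mpr ⟨s, hST hs, hadj⟩
    · exact (Finset.mem_inter.mp hx).2
  calc T.card = S.card + (T ∩ nbhd G T).card := (Finset.card_sdiff_add_card_inter T _).symm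
    _ ≤ (nbhd G S).card + (T ∩ nbhd G T).card := Nat.add_le_add_right (h S hS) _
    _ = (nbhd G S ∪ (T ∩ nbhd G T)).card := (Finset.card_union_of_disjoint hdisj).symm
    _ ≤ (nbhd G T).card := Finset.card_le_card hsub

/-- For a finite simple undirected connected graph `G`, `|S| ≤ |N(S)|` holds for every
independent set `S ⊆ V` (equivalently `ν̄_G ≤ 0`) if and only if `G` is quasi-regularizable. -/
theorem nonpos_vulnerability_iff_quasiRegularizable
    [Fintype V] [DecidableEq V] (G : SimpleGraph V) [DecidableRel G.Adj]
    (hconn : G.Connected) :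
    (∀ S : Finset V, IsIndepF G S → S.card ≤ (nbhd G S).card) ↔ QuasiRegularizable G := by
  constructor
  · -- hard direction: via Hall's theorem on the bipartite double cover
    intro h
    have hall : ∀ s : Finset V, s.card ≤ (s.biUnion (fun i => G.neighborFinset i)).card := by
      intro s
      have : s.biUnion (fun i => G.neighborFinset i) = nbhd G s := by
        ext j
        simp [mem_nbhd, SimpleGraph.mem_neighborFinset]
      rw [this]
      exact nbhd_card_all G h s
    obtain ⟨f, hinj, hf⟩ :=
      (Finset.all_card_le_biUnion_card_iff_exists_injective
        (fun i => G.neighborFinset i)).mp hall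
    have hadjf : ∀ x, G.Adj x (f x) := fun x => (SimpleGraph.mem_neighborFinset G x (f x)).mp (hf x)
    have hbij : Function.Bijective f := Finite.injective_iff_bijective.mp hinj
    refine ⟨fun e => (Finset.univ.filter fun j => s(j, f j) = e).card, 2, by norm_num, ?_⟩
    intro i
    rw [finsum_inc]
    obtain ⟨b, hb⟩ := hbij.2 i
    have hbi : b ≠ i := by
      intro hbeq
      exact G.irrefl (hbeq ▸ hb ▸ hadjf b)
    set A : Finset V := Finset.univ.filter fun j => i ∈ s(j, f j) with hA
    have hmemA : ∀ j ∈ A, s(j, f j) ∈ G.incidenceFinset i := by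
      intro j hj
      rw [SimpleGraph.mem_incidenceFinset]
      exact ⟨(SimpleGraph.mem_edgeSet G).mpr (hadjf j), (Finset.mem_filter.mp hj).2⟩
    have hfib : A.card = ∑ e ∈ G.incidenceFinset i, (A.filter fun j => s(j, f j) = e).card :=
      Finset.card_eq_sum_card_fiberwise hmemA
    have hfib2 : ∀ e ∈ G.incidenceFinset i,
        (A.filter fun j => s(j, f j) = e) = Finset.univ.filter fun j => s(j, f j) = e := by
      intro e he
      ext j
      simp only [hA, Finset.filter_filter, Finset.mem_filter, Finset.mem_univ, true_and,
        and_iff_right_iff_imp]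
      intro hje
      have : i ∈ e := (Set.mem_toFinset.mp he).2
      rw [← hje] at this
      exact this
    have hAcard : A = {i, b} := by
      ext j
      simp only [hA, Finset.mem_filter, Finset.mem_univ, true_and, Sym2.mem_iff,
        Finset.mem_insert, Finset.mem_singleton]
      constructor
      · rintro (h1 | h1)
        · exact Or.inl h1.symm
        · exact Or.inr (hinj (h1.symm.trans hb.symm))
      · rintro (h1 | h1)
        · exact Or.inl h1.symm
        · exact Or.inr (by rw [h1, hb])
    calc ∑ e ∈ G.incidenceFinset i, (Finset.univ.filter fun j => s(j, f j) = e).card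
        = ∑ e ∈ G.incidenceFinset i, (A.filter fun j => s(j, f j) = e).card :=
          (Finset.sum_congr rfl fun e he => by rw [hfib2 e he]).symm
      _ = A.card := hfib.symm
      _ = 2 := by rw [hAcard]; exact Finset.card_pair (fun hib => hbi hib.symm)
  · -- easy direction: double counting
    rintro ⟨w, c, hc, hw⟩ S hS
    have hwf : ∀ i : V, ∑ e ∈ G.incidenceFinset i, w e = c := by
      intro i; rw [← finsum_inc]; exact hw i
    have hdisj : ∀ i ∈ S, ∀ j ∈ S, i ≠ j →
        Disjoint (G.incidenceFinset i) (G.incidenceFinset j) := by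
      intro i hi j hj hij
      rw [Finset.disjoint_left]
      intro e hei hej
      have h1 := Set.mem_toFinset.mp hei
      have h2 := Set.mem_toFinset.mp hej
      have : e = s(i, j) := (Sym2.mem_and_mem_iff hij).mp ⟨h1.2, h2.2⟩
      exact hS i hi j hj ((SimpleGraph.mem_edgeSet G).mp (this ▸ h1.1))
    have key1 : c * S.card = ∑ e ∈ S.biUnion (fun i => G.incidenceFinset i), w e := by
      rw [Finset.sum_biUnion hdisj]
      rw [Finset.sum_congr rfl (fun i _ => hwf i)]
      simp [mul_comm]
    have hsub : S.biUnion (fun i => G.incidenceFinset i) ⊆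
        (nbhd G S).biUnion (fun j => G.incidenceFinset j) := by
      intro e he
      obtain ⟨i, hi, hei⟩ := Finset.mem_biUnion.mp he
      have h1 := Set.mem_toFinset.mp hei
      induction e with
      | h x y =>
        have hadj : G.Adj x y := (SimpleGraph.mem_edgeSet G).mp h1.1
        rcases Sym2.mem_iff.mp h1.2 with hix | hiy
        · subst hix
          refine Finset.mem_biUnion.mpr ⟨y, (mem_nbhd G S y).mpr ⟨i, hi, hadj⟩, ?_⟩
          rw [SimpleGraph.mem_incidenceFinset]
          rw [Sym2.eq_swap]
          exact (SimpleGraph.mem_incidenceSet G y i).mpr hadj.symm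
        · subst hiy
          refine Finset.mem_biUnion.mpr ⟨x, (mem_nbhd G S x).mpr ⟨i, hi, hadj.symm⟩, ?_⟩
          rw [SimpleGraph.mem_incidenceFinset]
          exact (SimpleGraph.mem_incidenceSet G x i).mpr hadj
    have key2 : ∑ e ∈ (nbhd G S).biUnion (fun j => G.incidenceFinset j), w e ≤
        c * (nbhd G S).card := by
      refine le_trans (sum_biUnion_le' w _ _) ?_
      rw [Finset.sum_congr rfl (fun j _ => hwf j)]
      simp [mul_comm]
    have : c * S.card ≤ c * (nbhd G S).card := by
      rw [key1]
      exact le_trans (Finset.sum_le_sum_of_subset hsub) key2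
    exact Nat.le_of_mul_le_mul_left this hc
end

section
/- Let G = (V,E) be a finite simple undirected connected graph with at least two vertices and let n = |V|. For each i ∈ V, the Shapley value of i in the coalitional game (V, q_G) equals φq_i = -1 - 1/(1 + d_i) + Σ_{j adjacent to i} 1/((1 + d_j) d_j), where d_j is the degree of vertex j. That is, (1/n!) · Σ over all orderings L of V of (q_G(T_L(i) ∪ {i}) - q_G(T_L(i))) = -1 - 1/(1+d_i) + Σ_{j ∈ N({i})} 1/((1+d_j)d_j), where T_L(i) is the set of vertices preceding i in the ordering L. -/
open Finset

variable {V : Type*}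

/-- `B(T) = {i ∈ V : N({i}) ⊆ T}`: the set of vertices all of whose neighbors lie in `T`. -/
def bset [Fintype V] [DecidableEq V] (G : SimpleGraph V) [DecidableRel G.Adj]
    (T : Finset V) : Finset V :=
  Finset.univ.filter fun i => ∀ j, G.Adj i j → j ∈ T

/-- `S(T) = B(T) \ T`. -/
def sset [Fintype V] [DecidableEq V] (G : SimpleGraph V) [DecidableRel G.Adj]
    (T : Finset V) : Finset V :=
  bset G T \ T

/-- The power function `q_G(T) = |S(T)| - |T|`. -/
def powerQ [Fintype V] [DecidableEq V] (G : SimpleGraph V) [DecidableRel G.Adj]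
    (T : Finset V) : ℤ :=
  ((sset G T).card : ℤ) - (T.card : ℤ)

/-- `T_L(i)`: the set of vertices preceding `i` in the ordering `L` of the vertices. -/
def precSet [Fintype V] [DecidableEq V] (L : V ≃ Fin (Fintype.card V)) (i : V) : Finset V :=
  Finset.univ.filter fun k => L k < L i

lemma filter_card_eq_of_perm [Fintype V] [DecidableEq V] {n : ℕ}
    (p q : (V ≃ Fin n) → Prop) [DecidablePred p] [DecidablePred q]
    (τ : Equiv.Perm V) (h : ∀ L, q (τ.trans L) ↔ p L) :
    (univ.filter p).card = (univ.filter q).card := by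
  apply Finset.card_bij' (i := fun L _ => τ.trans L) (j := fun L _ => τ.symm.trans L)
  · intro L hL
    simp only [mem_filter, mem_univ, true_and] at hL ⊢
    exact (h L).2 hL
  · intro L hL
    simp only [mem_filter, mem_univ, true_and] at hL ⊢
    have := h (τ.symm.trans L)
    rw [← Equiv.trans_assoc, Equiv.self_trans_symm, Equiv.refl_trans] at this
    exact this.1 hL
  · intro L _
    rw [← Equiv.trans_assoc, Equiv.symm_trans_self, Equiv.refl_trans]
  · intro L _
    rw [← Equiv.trans_assoc, Equiv.self_trans_symm, Equiv.refl_trans]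

lemma swap_mem_iff [DecidableEq V] {S : Finset V} {u v : V} (hu : u ∈ S) (hv : v ∈ S) (a : V) :
    Equiv.swap u v a ∈ S ↔ a ∈ S := by
  rcases eq_or_ne a u with rfl | hau
  · simp [hu, hv]
  rcases eq_or_ne a v with rfl | hav
  · simp [hu, hv]
  · rw [Equiv.swap_apply_of_ne_of_ne hau hav]

lemma forall_transfer (S : Finset V) (τ : Equiv.Perm V)
    (hS : ∀ a, τ a ∈ S ↔ a ∈ S) (c : V) (f : V → Prop) :
    (∀ a ∈ S, a ≠ c → f (τ a)) ↔ (∀ b ∈ S, b ≠ τ c → f b) := by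
  constructor
  · intro h b hb hbx
    have h1 : τ (τ.symm b) = b := τ.apply_symm_apply b
    have := h (τ.symm b) (by rw [← hS, h1]; exact hb)
      (fun hc => hbx (by rw [← h1, hc]))
    rwa [h1] at this
  · intro h a ha hax
    exact h (τ a) ((hS a).2 ha) (fun hc => hax (τ.injective hc))

lemma count_top_two [Fintype V] [DecidableEq V] (S : Finset V) (x y : V) (hx : x ∈ S) (hy : y ∈ S) (hxy : x ≠ y) :
    (univ.filter fun L : V ≃ Fin (Fintype.card V) =>
      (∀ a ∈ S, a ≠ x → L a < L x) ∧ (∀ a ∈ S, a ≠ x → a ≠ y → L a < L y)).card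
      * (S.card * (S.card - 1)) = (Fintype.card V).factorial := by
  set n := Fintype.card V
  have hceq : ∀ p ∈ S.offDiag,
      (univ.filter fun L : V ≃ Fin n =>
        (∀ a ∈ S, a ≠ p.1 → L a < L p.1) ∧ (∀ a ∈ S, a ≠ p.1 → a ≠ p.2 → L a < L p.2)).card
      = (univ.filter fun L : V ≃ Fin n =>
        (∀ a ∈ S, a ≠ x → L a < L x) ∧ (∀ a ∈ S, a ≠ x → a ≠ y → L a < L y)).card := by
    rintro ⟨x', y'⟩ hp
    obtain ⟨hx', hy', hx'y'⟩ := Finset.mem_offDiag.1 hp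
    set x₁ := Equiv.swap y y' x with hx₁
    have hx₁S : x₁ ∈ S := by
      rw [hx₁, Equiv.swap_apply_def]
      split_ifs <;> assumption
    have hx₁y' : x₁ ≠ y' := by
      intro h
      have : Equiv.swap y y' x = Equiv.swap y y' y := by rw [← hx₁] at *; rw [h, Equiv.swap_apply_left]
      exact hxy ((Equiv.swap y y').injective this)
    set τ : Equiv.Perm V := (Equiv.swap x' x₁).trans (Equiv.swap y y') with hτ
    have hτx' : τ x' = x := by
      rw [hτ]
      simp only [Equiv.trans_apply, Equiv.swap_apply_left]
      rw [hx₁, Equiv.swap_apply_self]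
    have hτy' : τ y' = y := by
      rw [hτ]
      simp only [Equiv.trans_apply]
      rw [Equiv.swap_apply_of_ne_of_ne (Ne.symm hx'y') (Ne.symm hx₁y'), Equiv.swap_apply_right]
    have hS : ∀ a, τ a ∈ S ↔ a ∈ S := by
      intro a
      rw [hτ]
      simp only [Equiv.trans_apply]
      rw [swap_mem_iff hy hy', swap_mem_iff hx' hx₁S]
    refine (filter_card_eq_of_perm
      (p := fun L : V ≃ Fin n =>
        (∀ a ∈ S, a ≠ x → L a < L x) ∧ (∀ a ∈ S, a ≠ x → a ≠ y → L a < L y))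
      (q := fun L : V ≃ Fin n =>
        (∀ a ∈ S, a ≠ x' → L a < L x') ∧ (∀ a ∈ S, a ≠ x' → a ≠ y' → L a < L y'))
      τ fun L => ?_).symm
    simp only [Equiv.trans_apply]
    constructor
    · rintro ⟨h1, h2⟩
      refine ⟨?_, ?_⟩
      · have := (forall_transfer S τ hS x' (fun b => L b < L (τ x'))).1 h1
        rwa [hτx'] at this
      · have h2' : ∀ a ∈ S, a ≠ x' → (τ a ≠ τ y' → L (τ a) < L (τ y')) :=
          fun a ha hax h => h2 a ha hax (fun e => h (congrArg τ e))
        have := (forall_transfer S τ hS x' (fun b => b ≠ τ y' → L b < L (τ y'))).1 h2'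
        rw [hτx', hτy'] at this
        exact this
    · rintro ⟨h1, h2⟩
      refine ⟨?_, ?_⟩
      · apply (forall_transfer S τ hS x' (fun b => L b < L (τ x'))).2
        rw [hτx']; exact h1
      · intro a ha hax hay
        have h2' : ∀ b ∈ S, b ≠ τ x' → (b ≠ τ y' → L b < L (τ y')) := by
          rw [hτx', hτy']; exact h2
        exact (forall_transfer S τ hS x' (fun b => b ≠ τ y' → L b < L (τ y'))).2 h2' a ha hax
          (fun e => hay (τ.injective e))
  have hcard2 : 2 ≤ S.card := Finset.one_lt_card.2 ⟨x, hx, y, hy, hxy⟩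
  have hpart : ∑ p ∈ S.offDiag,
      (univ.filter fun L : V ≃ Fin n =>
        (∀ a ∈ S, a ≠ p.1 → L a < L p.1) ∧ (∀ a ∈ S, a ≠ p.1 → a ≠ p.2 → L a < L p.2)).card
      = n.factorial := by
    have hdisj : (↑S.offDiag : Set (V × V)).PairwiseDisjoint fun p =>
        (univ.filter fun L : V ≃ Fin n =>
          (∀ a ∈ S, a ≠ p.1 → L a < L p.1) ∧ (∀ a ∈ S, a ≠ p.1 → a ≠ p.2 → L a < L p.2)) := by
      rintro ⟨u, v⟩ huv ⟨u', v'⟩ hu'v' hne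
      obtain ⟨huS, hvS, huvne⟩ := Finset.mem_offDiag.1 (by exact_mod_cast huv)
      obtain ⟨hu'S, hv'S, hu'v'ne⟩ := Finset.mem_offDiag.1 (by exact_mod_cast hu'v')
      simp only [Function.onFun, Finset.disjoint_left, mem_filter, mem_univ, true_and]
      rintro L ⟨h1, h2⟩ ⟨h1', h2'⟩
      rcases eq_or_ne u u' with rfl | huu'
      · have hvv' : v ≠ v' := fun h => hne (by rw [h])
        have := h2 v' hv'S (Ne.symm hu'v'ne) (Ne.symm hvv')
        have := h2' v hvS (Ne.symm huvne) hvv'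
        omega
      · have := h1 u' hu'S (Ne.symm huu')
        have := h1' u huS huu'
        omega
    rw [← Finset.card_biUnion hdisj]
    have : S.offDiag.biUnion (fun p =>
        (univ.filter fun L : V ≃ Fin n =>
          (∀ a ∈ S, a ≠ p.1 → L a < L p.1) ∧ (∀ a ∈ S, a ≠ p.1 → a ≠ p.2 → L a < L p.2))) = univ := by
      apply Finset.eq_univ_of_forall
      intro L
      obtain ⟨u, hu, hmaxu⟩ := S.exists_max_image (fun a => L a) ⟨x, hx⟩
      have herase : (S.erase u).Nonempty := by
        rw [← Finset.card_pos, Finset.card_erase_of_mem hu]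
        omega
      obtain ⟨v, hv, hmaxv⟩ := (S.erase u).exists_max_image (fun a => L a) herase
      have hvS := Finset.mem_of_mem_erase hv
      have hvu := Finset.ne_of_mem_erase hv
      refine Finset.mem_biUnion.2 ⟨(u, v), Finset.mem_offDiag.2 ⟨hu, hvS, Ne.symm hvu⟩, ?_⟩
      simp only [mem_filter, mem_univ, true_and]
      constructor
      · intro a ha hau
        exact lt_of_le_of_ne (hmaxu a ha) (fun h => hau (L.injective h))
      · intro a ha hau hav
        exact lt_of_le_of_ne (hmaxv a (Finset.mem_erase.2 ⟨hau, ha⟩)) (fun h => hav (L.injective h))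
    rw [this, Finset.card_univ, Fintype.card_equiv (Fintype.equivFinOfCardEq rfl)]
  have hod : S.offDiag.card = S.card * (S.card - 1) := by
    rw [Finset.offDiag_card]
    cases' S.card with m
    · simp
    · simp [Nat.succ_sub_one, Nat.mul_comm]
      ring_nf
      omega
  calc (univ.filter fun L : V ≃ Fin n =>
      (∀ a ∈ S, a ≠ x → L a < L x) ∧ (∀ a ∈ S, a ≠ x → a ≠ y → L a < L y)).card
      * (S.card * (S.card - 1))
      = ∑ p ∈ S.offDiag, (univ.filter fun L : V ≃ Fin n =>
        (∀ a ∈ S, a ≠ x → L a < L x) ∧ (∀ a ∈ S, a ≠ x → a ≠ y → L a < L y)).card := by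
        rw [Finset.sum_const, smul_eq_mul, hod, mul_comm]
    _ = ∑ p ∈ S.offDiag, (univ.filter fun L : V ≃ Fin n =>
        (∀ a ∈ S, a ≠ p.1 → L a < L p.1) ∧ (∀ a ∈ S, a ≠ p.1 → a ≠ p.2 → L a < L p.2)).card :=
        (Finset.sum_congr rfl hceq).symm
    _ = n.factorial := hpart

lemma count_max [Fintype V] [DecidableEq V] (S : Finset V) (x : V) (hx : x ∈ S) :
    (univ.filter fun L : V ≃ Fin (Fintype.card V) =>
      ∀ a ∈ S, a ≠ x → L a < L x).card * S.card = (Fintype.card V).factorial := by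
  set n := Fintype.card V
  set c : V → ℕ := fun y =>
    (univ.filter fun L : V ≃ Fin n => ∀ a ∈ S, a ≠ y → L a < L y).card with hc
  -- all counts equal
  have hceq : ∀ y ∈ S, c y = c x := by
    intro y hy
    simp only [hc]
    refine filter_card_eq_of_perm (p := fun L : V ≃ Fin n => ∀ a ∈ S, a ≠ y → L a < L y)
      (q := fun L : V ≃ Fin n => ∀ a ∈ S, a ≠ x → L a < L x) (Equiv.swap x y) fun L => ?_
    constructor
    · intro hL a ha hax
      have h2 := hL (Equiv.swap x y a) ((swap_mem_iff hx hy a).2 ha)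
        (by
          intro h
          apply hax
          have := congrArg (Equiv.swap x y) h
          simpa using this)
      simpa using h2
    · intro hL a ha hay
      have h2 := hL (Equiv.swap x y a) ((swap_mem_iff hx hy a).2 ha)
        (by
          intro h
          apply hay
          have := congrArg (Equiv.swap x y) h
          simpa using this)
      simpa using h2
  -- partition
  have hpart : ∑ y ∈ S, c y = n.factorial := by
    have hdisj : (S : Set V).PairwiseDisjoint fun y =>
        (univ.filter fun L : V ≃ Fin n => ∀ a ∈ S, a ≠ y → L a < L y) := by
      intro y hy z hz hyz
      simp only [Function.onFun, Finset.disjoint_left, mem_filter, mem_univ, true_and]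
      intro L hLy hLz
      exact absurd (hLz y hy hyz) (not_lt.2 (le_of_lt (hLy z hz (Ne.symm hyz))))
    rw [← Finset.card_biUnion hdisj]
    have : S.biUnion (fun y =>
        (univ.filter fun L : V ≃ Fin n => ∀ a ∈ S, a ≠ y → L a < L y)) = univ := by
      apply Finset.eq_univ_of_forall
      intro L
      obtain ⟨y, hy, hmax⟩ := S.exists_max_image (fun a => L a) ⟨x, hx⟩
      refine Finset.mem_biUnion.2 ⟨y, hy, ?_⟩
      simp only [mem_filter, mem_univ, true_and]
      intro a ha hay
      exact lt_of_le_of_ne (hmax a ha) (fun h => hay (L.injective h))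
    rw [this, Finset.card_univ, Fintype.card_equiv (Fintype.equivFinOfCardEq rfl)]
  calc c x * S.card = ∑ y ∈ S, c x := by rw [Finset.sum_const, smul_eq_mul, mul_comm]
    _ = ∑ y ∈ S, c y := by exact (Finset.sum_congr rfl hceq).symm
    _ = n.factorial := hpart


lemma deg_pos [Fintype V] (G : SimpleGraph V) [DecidableRel G.Adj] (hconn : G.Connected)
    (hcard : 2 ≤ Fintype.card V) (j : V) : 0 < G.degree j := by
  rw [SimpleGraph.degree_pos_iff_exists_adj]
  obtain ⟨k, hk⟩ := Fintype.exists_ne_of_one_lt_card (by omega) j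
  obtain ⟨w⟩ := hconn.preconnected j k
  cases w with
  | nil => exact absurd rfl (Ne.symm hk)
  | cons h p => exact ⟨_, h⟩

/-- Let `G` be a finite simple undirected connected graph with at least two vertices and
`n = |V|`. For each vertex `i`, the Shapley value of `i` in the coalitional game `(V, q_G)`
equals `φq_i = -1 - 1/(1 + d_i) + Σ_{j adjacent to i} 1/((1 + d_j) d_j)`. -/
theorem shapley_powerQ
    [Fintype V] [DecidableEq V] (G : SimpleGraph V) [DecidableRel G.Adj]
    (hconn : G.Connected) (hcard : 2 ≤ Fintype.card V) (i : V) :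
    (1 / ((Fintype.card V).factorial : ℝ)) *
        ∑ L : V ≃ Fin (Fintype.card V),
          ((powerQ G (precSet L i ∪ {i}) : ℝ) - (powerQ G (precSet L i) : ℝ)) =
      -1 - 1 / (1 + (G.degree i : ℝ)) +
        ∑ j ∈ G.neighborFinset i, (1 : ℝ) / ((1 + (G.degree j : ℝ)) * (G.degree j : ℝ)) := by
  have hdeg : ∀ j, 0 < G.degree j := deg_pos G hconn hcard
  have hfacpos : (0:ℝ) < ((Fintype.card V).factorial : ℝ) := by
    exact_mod_cast (Fintype.card V).factorial_pos
  have hfacne : ((Fintype.card V).factorial : ℝ) ≠ 0 := ne_of_gt hfacpos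
  have hiT : ∀ L : V ≃ Fin (Fintype.card V), i ∉ precSet L i := by
    intro L; simp [precSet]
  -- card of the equiv type
  have hcardEquiv : (Finset.univ : Finset (V ≃ Fin (Fintype.card V))).card
      = (Fintype.card V).factorial := by
    rw [Finset.card_univ, Fintype.card_equiv (Fintype.equivFinOfCardEq rfl)]
  -- rewrite each summand
  have hsummand : ∀ L : V ≃ Fin (Fintype.card V),
      ((powerQ G (precSet L i ∪ {i}) : ℝ) - (powerQ G (precSet L i) : ℝ))
      = (∑ j : V, ((if j ∈ sset G (precSet L i ∪ {i}) then (1:ℝ) else 0)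
          - (if j ∈ sset G (precSet L i) then (1:ℝ) else 0))) - 1 := by
    intro L
    have hins : precSet L i ∪ {i} = insert i (precSet L i) := by
      rw [Finset.union_comm, ← Finset.insert_eq]
    have hcardU : (precSet L i ∪ {i}).card = (precSet L i).card + 1 := by
      rw [hins, Finset.card_insert_of_notMem (hiT L)]
    have hcs : ∀ s : Finset V, (∑ j : V, (if j ∈ s then (1:ℝ) else 0)) = s.card := by
      intro s
      rw [Finset.sum_boole]
      simp
    rw [Finset.sum_sub_distrib, hcs, hcs]
    simp only [powerQ]
    push_cast
    rw [hcardU]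
    push_cast
    ring
  rw [Finset.sum_congr rfl (fun L _ => hsummand L), Finset.sum_sub_distrib,
    Finset.sum_const, hcardEquiv]
  rw [Finset.sum_comm]
  set cdiff : V → ℝ := fun j => ∑ L : V ≃ Fin (Fintype.card V),
      ((if j ∈ sset G (precSet L i ∪ {i}) then (1:ℝ) else 0)
        - (if j ∈ sset G (precSet L i) then (1:ℝ) else 0)) with hcdiff
  have hsmem : ∀ (T : Finset V) (j : V),
      j ∈ sset G T ↔ (∀ a, G.Adj j a → a ∈ T) ∧ j ∉ T := by
    intro T j
    simp [sset, bset, Finset.mem_sdiff, Finset.mem_filter]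
  have hTmem : ∀ (L : V ≃ Fin (Fintype.card V)) (a : V), a ∈ precSet L i ↔ L a < L i := by
    intro L a; simp [precSet]
  have hzero : ∀ j ∈ (Finset.univ : Finset V), j ∉ insert i (G.neighborFinset i) → cdiff j = 0 := by
    intro j _ hj
    have hji : j ≠ i := fun h => hj (by rw [h]; exact Finset.mem_insert_self i _)
    have hnadj : ¬ G.Adj i j := fun h =>
      hj (Finset.mem_insert_of_mem ((G.mem_neighborFinset i j).2 h))
    apply Finset.sum_eq_zero
    intro L _
    have hiff : (j ∈ sset G (precSet L i ∪ {i})) ↔ (j ∈ sset G (precSet L i)) := by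
      rw [hsmem, hsmem]
      have haux : ∀ a, G.Adj j a → (a ∈ precSet L i ∪ {i} ↔ a ∈ precSet L i) := by
        intro a hadj
        have hai : a ≠ i := fun h => hnadj (by rw [← h]; exact hadj.symm)
        rw [Finset.mem_union, Finset.mem_singleton]
        simp [hai]
      have hjU : j ∈ precSet L i ∪ {i} ↔ j ∈ precSet L i := by
        rw [Finset.mem_union, Finset.mem_singleton]
        simp [hji]
      constructor
      · rintro ⟨h1, h2⟩
        exact ⟨fun a ha => (haux a ha).1 (h1 a ha), fun h => h2 (hjU.2 h)⟩
      · rintro ⟨h1, h2⟩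
        exact ⟨fun a ha => (haux a ha).2 (h1 a ha), fun h => h2 (hjU.1 h)⟩
    rw [if_congr hiff rfl rfl, sub_self]
  have hci : cdiff i = -(((Fintype.card V).factorial : ℝ) / (1 + G.degree i)) := by
    have hterm : ∀ L : V ≃ Fin (Fintype.card V),
        ((if i ∈ sset G (precSet L i ∪ {i}) then (1:ℝ) else 0)
          - (if i ∈ sset G (precSet L i) then (1:ℝ) else 0))
        = -(if (∀ a ∈ insert i (G.neighborFinset i), a ≠ i → L a < L i)
            then (1:ℝ) else 0) := by
      intro L
      have h1 : i ∉ sset G (precSet L i ∪ {i}) := by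
        rw [hsmem]
        rintro ⟨-, h⟩
        exact h (Finset.mem_union_right _ (Finset.mem_singleton_self i))
      have h2 : i ∈ sset G (precSet L i) ↔
          (∀ a ∈ insert i (G.neighborFinset i), a ≠ i → L a < L i) := by
        rw [hsmem]
        constructor
        · rintro ⟨h, -⟩ a ha hai
          rcases Finset.mem_insert.1 ha with rfl | ha'
          · exact absurd rfl hai
          · exact (hTmem L a).1 (h a ((G.mem_neighborFinset i a).1 ha'))
        · intro h
          refine ⟨fun a ha => (hTmem L a).2
            (h a (Finset.mem_insert_of_mem ((G.mem_neighborFinset i a).2 ha)) ha.ne'), hiT L⟩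
      rw [if_neg h1, if_congr h2 rfl rfl, zero_sub]
    rw [hcdiff]
    simp only []
    rw [Finset.sum_congr rfl (fun L _ => hterm L), Finset.sum_neg_distrib, Finset.sum_boole]
    have hcm := count_max (insert i (G.neighborFinset i)) i (Finset.mem_insert_self i _)
    rw [Finset.card_insert_of_notMem (SimpleGraph.notMem_neighborFinset_self G i),
      G.card_neighborFinset_eq_degree i] at hcm
    have : ((univ.filter fun L : V ≃ Fin (Fintype.card V) =>
        ∀ a ∈ insert i (G.neighborFinset i), a ≠ i → L a < L i).card : ℝ)
        * (G.degree i + 1) = (Fintype.card V).factorial := by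
      exact_mod_cast hcm
    have hdi' : (1:ℝ) + (G.degree i : ℝ) ≠ 0 := by positivity
    rw [neg_inj, eq_div_iff hdi']
    linarith [this]
  have hcj : ∀ j ∈ G.neighborFinset i,
      cdiff j = ((Fintype.card V).factorial : ℝ) / ((1 + G.degree j) * G.degree j) := by
    intro j hj
    have hadj : G.Adj i j := (G.mem_neighborFinset i j).1 hj
    have hji : j ≠ i := hadj.ne'
    have hiNj : i ∈ G.neighborFinset j := (G.mem_neighborFinset j i).2 hadj.symm
    set Sj := insert j (G.neighborFinset j) with hSj
    have hterm : ∀ L : V ≃ Fin (Fintype.card V),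
        ((if j ∈ sset G (precSet L i ∪ {i}) then (1:ℝ) else 0)
          - (if j ∈ sset G (precSet L i) then (1:ℝ) else 0))
        = (if (∀ a ∈ Sj, a ≠ j → L a < L j) ∧ (∀ a ∈ Sj, a ≠ j → a ≠ i → L a < L i)
            then (1:ℝ) else 0) := by
      intro L
      have h2 : j ∉ sset G (precSet L i) := by
        rw [hsmem]
        rintro ⟨h, -⟩
        exact hiT L (h i hadj.symm)
      have h1 : j ∈ sset G (precSet L i ∪ {i}) ↔
          ((∀ a ∈ Sj, a ≠ j → L a < L j) ∧ (∀ a ∈ Sj, a ≠ j → a ≠ i → L a < L i)) := by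
        rw [hsmem]
        have hUm : ∀ a : V, a ∈ precSet L i ∪ {i} ↔ (L a < L i ∨ a = i) := by
          intro a
          rw [Finset.mem_union, Finset.mem_singleton, hTmem]
        constructor
        · rintro ⟨h, hnT⟩
          have hLij : L i < L j := by
            rw [hUm] at hnT
            push_neg at hnT
            exact lt_of_le_of_ne hnT.1 (fun e => hji (L.injective e.symm))
          constructor
          · intro a ha haj
            have ha' : G.Adj j a := (G.mem_neighborFinset j a).1
              ((Finset.mem_insert.1 ha).resolve_left haj)
            rcases (hUm a).1 (h a ha') with h' | rfl
            · exact h'.trans hLij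
            · exact hLij
          · intro a ha haj hai
            have ha' : G.Adj j a := (G.mem_neighborFinset j a).1
              ((Finset.mem_insert.1 ha).resolve_left haj)
            rcases (hUm a).1 (h a ha') with h' | rfl
            · exact h'
            · exact absurd rfl hai
        · rintro ⟨hP1, hP2⟩
          refine ⟨?_, ?_⟩
          · intro a ha
            rw [hUm]
            rcases eq_or_ne a i with rfl | hai
            · exact Or.inr rfl
            · exact Or.inl (hP2 a (Finset.mem_insert_of_mem ((G.mem_neighborFinset j a).2 ha))
                ha.ne' hai)
          · rw [hUm]
            rintro (h' | h')
            · exact absurd (hP1 i (Finset.mem_insert_of_mem hiNj) (Ne.symm hji)) (not_lt.2 h'.le)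
            · exact hji h'
      rw [if_neg h2, if_congr h1 rfl rfl, sub_zero]
    rw [hcdiff]
    simp only []
    rw [Finset.sum_congr rfl (fun L _ => hterm L), Finset.sum_boole]
    have hctt := count_top_two Sj j i (Finset.mem_insert_self j _)
      (Finset.mem_insert_of_mem hiNj) hji
    have hScard : Sj.card = G.degree j + 1 := by
      rw [hSj, Finset.card_insert_of_notMem (SimpleGraph.notMem_neighborFinset_self G j),
        G.card_neighborFinset_eq_degree j]
    rw [hScard] at hctt
    simp only [Nat.add_sub_cancel] at hctt
    have hcast : ((univ.filter fun L : V ≃ Fin (Fintype.card V) =>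
        (∀ a ∈ Sj, a ≠ j → L a < L j) ∧ (∀ a ∈ Sj, a ≠ j → a ≠ i → L a < L i)).card : ℝ)
        * ((G.degree j + 1) * G.degree j) = (Fintype.card V).factorial := by
      exact_mod_cast hctt
    have hd1 : (1:ℝ) + (G.degree j : ℝ) ≠ 0 := by positivity
    have hd2 : (G.degree j : ℝ) ≠ 0 := by exact_mod_cast (hdeg j).ne'
    rw [eq_div_iff (mul_ne_zero hd1 hd2)]
    push_cast at hcast
    linarith [hcast]
  rw [show (∑ j : V, cdiff j) = ∑ j ∈ insert i (G.neighborFinset i), cdiff j from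
    (Finset.sum_subset (Finset.subset_univ _) hzero).symm]
  rw [Finset.sum_insert (SimpleGraph.notMem_neighborFinset_self G i), hci,
    Finset.sum_congr rfl hcj]
  have hdi : (1:ℝ) + (G.degree i : ℝ) ≠ 0 := by positivity
  have e2 : (1 / ((Fintype.card V).factorial : ℝ)) * ((Fintype.card V).factorial • (1:ℝ)) = 1 := by
    rw [nsmul_eq_mul, mul_one]
    exact one_div_mul_cancel hfacne
  have h1 : (1:ℝ) / ((Fintype.card V).factorial : ℝ) *
      -(((Fintype.card V).factorial : ℝ) / (1 + G.degree i)) = -(1 / (1 + G.degree i)) := by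
    field_simp
  have h2 : ∀ j ∈ G.neighborFinset i, (1:ℝ) / ((Fintype.card V).factorial : ℝ) *
      (((Fintype.card V).factorial : ℝ) / ((1 + G.degree j) * G.degree j))
      = 1 / ((1 + G.degree j) * G.degree j) := by
    intro j _
    have hd1 : (1:ℝ) + (G.degree j : ℝ) ≠ 0 := by positivity
    have hd2 : (G.degree j : ℝ) ≠ 0 := by
      exact_mod_cast (hdeg j).ne'
    field_simp
  rw [mul_sub, e2, mul_add, Finset.mul_sum, h1, Finset.sum_congr rfl h2]
  ring
end
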